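/- If U spans the M⁻¹A-invariant subspace corresponding to eigenvalues λ₁,…,λ_d of M⁻¹A, then the spectrum of the deflated operator P_M M⁻¹ A equals {0} ∪ {λ_{d+1},…,λ_N}, where λ₁,…,λ_N is the full spectrum of M⁻¹A (counted with multiplicity). -/

import Mathlib

open scoped InnerProductSpace

/-- If U spans the M⁻¹A-invariant subspace for eigenvalues λ₁,…,λ_d, the spectrum of
the deflated operator P_M M⁻¹ A equals {0} ∪ {λ_{d+1},…,λ_N}. -/
theorem stmt7 {H : Type*} [NormedAddCommGroup H] [InnerProductSpace ℂ H]
    [FiniteDimensional ℂ H] {N d : ℕ}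
    (hN : Module.finrank ℂ H = N) (hd : 1 ≤ d) (hdN : d ≤ N)
    (M A Minv : H →ₗ[ℂ] H)
    (hM : M.IsSymmetric) (hA : A.IsSymmetric)
    (hMbij : Function.Bijective M) (hAbij : Function.Bijective A)
    (hMinv : ∀ x, M (Minv x) = x ∧ Minv (M x) = x)
    (hMpos : ∀ x : H, x ≠ 0 → 0 < (⟪x, M x⟫_ℂ).re)
    (lam : Fin N → ℝ)
    (W : Module.Basis (Fin N) ℂ H)
    (hW : ∀ i, Minv (A (W i)) = (lam i : ℂ) • W i)
    (U : Fin d → H)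
    (hU : Submodule.span ℂ (Set.range U)
        = Submodule.span ℂ (W '' {i : Fin N | (i : ℕ) < d}))
    (E : Matrix (Fin d) (Fin d) ℂ)
    (hE : E = Matrix.of fun i j => ⟪U i, A (U j)⟫_ℂ)
    (hEunit : IsUnit E.det)
    (PM : H →ₗ[ℂ] H)
    (hPM : ∀ x, PM x = x - ∑ i, (∑ j, E⁻¹ i j * ⟪M (U j), x⟫_ℂ) • Minv (A (U i))) :
    spectrum ℂ (PM ∘ₗ Minv ∘ₗ A : Module.End ℂ H)
      = insert (0 : ℂ) {z : ℂ | ∃ i : Fin N, d ≤ (i : ℕ) ∧ z = (lam i : ℂ)} := by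
  set T : H →ₗ[ℂ] H := Minv ∘ₗ A with hT
  have hTapp : ∀ x, T x = Minv (A x) := fun x => rfl
  have hTW : ∀ j, T (W j) = (lam j : ℂ) • W j := fun j => hW j
  set V : Submodule ℂ H := Submodule.span ℂ (W '' {i : Fin N | (i : ℕ) < d}) with hV
  -- coordinates ≥ d vanish on V
  have hVcoord : ∀ y ∈ V, ∀ i : Fin N, d ≤ (i : ℕ) → W.repr y i = 0 := by
    intro y hy i hi
    have hle : V ≤ LinearMap.ker (W.coord i) := by
      rw [hV, Submodule.span_le]
      rintro _ ⟨j, hj, rfl⟩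
      have hne : j ≠ i := by
        rintro rfl; exact absurd hi (not_le.mpr hj)
      simp [LinearMap.mem_ker, Module.Basis.coord_apply, Module.Basis.repr_self,
        Finsupp.single_apply, hne]
    simpa [Module.Basis.coord_apply] using hle hy
  -- T acts diagonally on coordinates
  have hTrepr : ∀ (x : H) (i : Fin N), W.repr (T x) i = (lam i : ℂ) * W.repr x i := by
    intro x i
    have key : ∀ j : Fin N, (W.repr ((lam j : ℂ) • W j)) i
        = (lam j : ℂ) * (if j = i then (1:ℂ) else 0) := by
      intro j
      rw [map_smul]
      simp [Module.Basis.repr_self, Finsupp.single_apply]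
    conv_lhs => rw [← Module.Basis.sum_repr W x]
    rw [map_sum]
    simp only [map_smul, hTW]
    rw [map_sum]
    simp only [Finsupp.finset_sum_apply, map_smul, Finsupp.smul_apply, smul_eq_mul, key]
    simp [Finsupp.single_apply, mul_ite, Finset.sum_ite_eq', mul_comm]
  -- V is T-invariant
  have hTinvV : ∀ y ∈ V, T y ∈ V := by
    intro y hy
    have hle : V ≤ V.comap T := by
      conv_lhs => rw [hV]
      rw [Submodule.span_le]
      rintro _ ⟨j, hj, rfl⟩
      simp only [SetLike.mem_coe, Submodule.mem_comap]
      rw [hTW j]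
      exact Submodule.smul_mem _ _ (Submodule.subset_span ⟨j, hj, rfl⟩)
    exact hle hy
  have hUmem : ∀ k, U k ∈ V := by
    intro k
    have : U k ∈ Submodule.span ℂ (Set.range U) :=
      Submodule.subset_span (Set.mem_range_self k)
    rwa [hU] at this
  have hTU : ∀ k, T (U k) ∈ V := fun k => hTinvV _ (hUmem k)
  -- the correction term lies in V
  have hq : ∀ x, x - PM x ∈ V := by
    intro x
    rw [hPM, sub_sub_cancel]
    exact Submodule.sum_mem _ fun i _ => Submodule.smul_mem _ _ (hTU i)
  -- inner product identity
  have hMU : ∀ (j : Fin d) (x : H), ⟪M (U j), T x⟫_ℂ = ⟪U j, A x⟫_ℂ := by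
    intro j x
    rw [hM (U j) (T x), hTapp, (hMinv (A x)).1]
  -- PM kills T (U k)
  have hPMTU : ∀ k, PM (T (U k)) = 0 := by
    intro k
    rw [hPM]
    have hsum : ∀ i, (∑ j, E⁻¹ i j * ⟪M (U j), T (U k)⟫_ℂ) = if i = k then 1 else 0 := by
      intro i
      have h1 : (∑ j, E⁻¹ i j * ⟪M (U j), T (U k)⟫_ℂ) = (E⁻¹ * E) i k := by
        rw [Matrix.mul_apply]
        refine Finset.sum_congr rfl fun j _ => ?_
        rw [hMU, hE]
        rfl
      rw [h1, Matrix.nonsing_inv_mul E hEunit, Matrix.one_apply]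
    simp only [hsum, ite_smul, one_smul, zero_smul]
    rw [Finset.sum_ite_eq' Finset.univ k fun i => Minv (A (U i))]
    simp [hTapp]
  -- PM kills T of anything in V
  have hPMTV : ∀ y ∈ V, PM (T y) = 0 := by
    have hle : Submodule.span ℂ (Set.range U) ≤ LinearMap.ker (PM ∘ₗ T) := by
      rw [Submodule.span_le]
      rintro _ ⟨k, rfl⟩
      exact hPMTU k
    intro y hy
    rw [← hU] at hy
    exact hle hy
  -- main computation of eigenvalues
  have hmain : ∀ μ : ℂ, Module.End.HasEigenvalue (PM ∘ₗ T : Module.End ℂ H) μ ↔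
      (μ = 0 ∨ ∃ i : Fin N, d ≤ (i : ℕ) ∧ μ = (lam i : ℂ)) := by
    intro μ
    constructor
    · intro hev
      by_contra hcon
      push_neg at hcon
      obtain ⟨hμ0, hμl⟩ := hcon
      obtain ⟨x, hx⟩ := hev.exists_hasEigenvector
      have hxe : PM (T x) = μ • x := hx.apply_eq_smul
      have hc : ∀ i : Fin N, d ≤ (i : ℕ) → W.repr x i = 0 := by
        intro i hi
        have h0 : W.repr (T x - PM (T x)) i = 0 := hVcoord _ (hq (T x)) i hi
        have h1 : W.repr (PM (T x)) i = (lam i : ℂ) * W.repr x i := by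
          have := hTrepr x i
          have h2 : W.repr (T x) i - W.repr (PM (T x)) i = 0 := by
            rw [← Finsupp.sub_apply, ← map_sub]; exact h0
          linear_combination this - h2
        rw [hxe] at h1
        have h3 : μ * W.repr x i = (lam i : ℂ) * W.repr x i := by
          simpa using h1
        have h4 : ((lam i : ℂ) - μ) * W.repr x i = 0 := by linear_combination -h3
        rcases mul_eq_zero.mp h4 with h | h
        · exact absurd (by linear_combination -h : μ = (lam i : ℂ)) (hμl i hi)
        · exact h
      have hxV : x ∈ V := by
        have hxr : x = ∑ j, W.repr x j • W j := (Module.Basis.sum_repr W x).symm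
        rw [hxr]
        refine Submodule.sum_mem _ fun j _ => ?_
        by_cases hj : (j : ℕ) < d
        · exact Submodule.smul_mem _ _ (Submodule.subset_span ⟨j, hj, rfl⟩)
        · rw [hc j (le_of_not_gt hj), zero_smul]; exact zero_mem _
      have : μ • x = 0 := by rw [← hxe, hPMTV x hxV]
      rcases smul_eq_zero.mp this with h | h
      · exact hμ0 h
      · exact hx.2 h
    · rintro (rfl | ⟨i, hi, rfl⟩)
      · have hNpos : 0 < N := lt_of_lt_of_le hd hdN
        set i0 : Fin N := ⟨0, hNpos⟩ with hi0
        have hmem : W i0 ∈ V :=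
          Submodule.subset_span ⟨i0, by simpa [hi0, Nat.one_le_iff_ne_zero, Nat.pos_iff_ne_zero] using hd, rfl⟩
        refine Module.End.hasEigenvalue_of_hasEigenvector
          ⟨Module.End.mem_eigenspace_iff.mpr ?_, W.ne_zero i0⟩
        show PM (T (W i0)) = (0:ℂ) • W i0
        rw [hPMTV _ hmem, zero_smul]
      · have hqV : W i - PM (W i) ∈ V := hq (W i)
        have heig : PM (T (PM (W i))) = (lam i : ℂ) • PM (W i) := by
          have hsplit : PM (W i) = W i - (W i - PM (W i)) := (sub_sub_cancel _ _).symm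
          conv_lhs => rw [hsplit]
          rw [map_sub, map_sub, hPMTV _ hqV, sub_zero, hTW, map_smul]
        have hne : PM (W i) ≠ 0 := by
          intro h0
          have h1 : W.repr (PM (W i)) i = 1 := by
            have h2 : W.repr (W i - PM (W i)) i = 0 := hVcoord _ hqV i hi
            have h3 : W.repr (W i) i - W.repr (PM (W i)) i = 0 := by
              rw [← Finsupp.sub_apply, ← map_sub]; exact h2
            have h4 : W.repr (W i) i = 1 := by simp [Module.Basis.repr_self]
            linear_combination h4 - h3
          rw [h0] at h1
          simp at h1
        exact Module.End.hasEigenvalue_of_hasEigenvector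
          ⟨Module.End.mem_eigenspace_iff.mpr heig, hne⟩
  ext μ
  rw [show (PM ∘ₗ Minv ∘ₗ A : Module.End ℂ H) = (PM ∘ₗ T : Module.End ℂ H) from rfl,
    ← Module.End.hasEigenvalue_iff_mem_spectrum]
  simp only [Set.mem_insert_iff, Set.mem_setOf_eq]
  exact hmain μ
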